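/- For every n ≥ 2 there exists C > 0 such that for every a with 0 < a < e^{−1}: ∫_{Δ_n × Δ_n} 1{t(r,s) ∉ Z_a} dr ds ≤ C·a. -/

import Mathlib

noncomputable section

/-- The simplex `Δ_n = {r ∈ [0,1]^n : r₁ < ⋯ < r_n}`. -/
def Delta (n : ℕ) : Set (Fin n → ℝ) :=
  {r | (∀ i, r i ∈ Set.Icc (0 : ℝ) 1) ∧ StrictMono r}

/-- The `2n` coordinates of `r` and `s` arranged in increasing order (indexed by `0,…,2n−1`). -/
def sortedMerge (n : ℕ) (r s : Fin n → ℝ) : ℕ → ℝ := fun i =>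
  ((Multiset.ofList (List.ofFn r ++ List.ofFn s)).sort (· ≤ ·)).getD i 0

/-- Membership in `Z_a ⊆ ℝ^{2n}` for a sequence `T` representing `(z₁,…,z_{2n}) = (T 0,…,T (2n−1))`:
`z₁ ≥ a`, `1 − z_{2n} ≥ a` and `z_j − z_{j−1} ≥ a` for `2 ≤ j ≤ 2n`. -/
def memZ (n : ℕ) (a : ℝ) (T : ℕ → ℝ) : Prop :=
  a ≤ T 0 ∧ a ≤ 1 - T (2 * n - 1) ∧ ∀ j : ℕ, 1 ≤ j → j ≤ 2 * n - 1 → a ≤ T j - T (j - 1)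

open MeasureTheory Set

def cube (n : ℕ) : Set (Fin n → ℝ) := Set.univ.pi fun _ => Set.Icc (0:ℝ) 1

lemma cube_meas (n : ℕ) : MeasurableSet (cube n) :=
  MeasurableSet.univ_pi fun _ => measurableSet_Icc

lemma vol_cube (n : ℕ) : volume (cube n) = 1 := by
  rw [cube, volume_pi_pi]
  simp [Real.volume_Icc]

lemma prod_left_le (n : ℕ) (E : Set (Fin n → ℝ)) {b : ENNReal}
    (hE : volume (cube n ∩ E) ≤ b) :
    volume ((cube n ×ˢ cube n) ∩ {p : (Fin n → ℝ) × (Fin n → ℝ) | p.1 ∈ E}) ≤ b := by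
  have hset : (cube n ×ˢ cube n) ∩ {p : (Fin n → ℝ) × (Fin n → ℝ) | p.1 ∈ E} =
      (cube n ∩ E) ×ˢ cube n := by
    ext ⟨x, y⟩
    simp only [Set.mem_inter_iff, Set.mem_prod, Set.mem_setOf_eq]
    tauto
  rw [hset, Measure.volume_eq_prod, Measure.prod_prod, vol_cube, mul_one]
  exact hE

lemma prod_right_le (n : ℕ) (E : Set (Fin n → ℝ)) {b : ENNReal}
    (hE : volume (cube n ∩ E) ≤ b) :
    volume ((cube n ×ˢ cube n) ∩ {p : (Fin n → ℝ) × (Fin n → ℝ) | p.2 ∈ E}) ≤ b := by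
  have hset : (cube n ×ˢ cube n) ∩ {p : (Fin n → ℝ) × (Fin n → ℝ) | p.2 ∈ E} =
      cube n ×ˢ (cube n ∩ E) := by
    ext ⟨x, y⟩
    simp only [Set.mem_inter_iff, Set.mem_prod, Set.mem_setOf_eq]
    tauto
  rw [hset, Measure.volume_eq_prod, Measure.prod_prod, vol_cube, one_mul]
  exact hE

lemma cube_slice_le (n : ℕ) (j : Fin n) (c a : ℝ) :
    volume ((Set.univ.pi fun _ : Fin n => Set.Icc (0:ℝ) 1) ∩ {x | |x j - c| < a}) ≤
      ENNReal.ofReal (2*a) := by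
  have hsub : (Set.univ.pi fun _ : Fin n => Set.Icc (0:ℝ) 1) ∩ {x | |x j - c| < a} ⊆
      Set.univ.pi fun k => if k = j then Set.Ioo (c - a) (c + a) ∩ Set.Icc (0:ℝ) 1
        else Set.Icc 0 1 := by
    rintro x ⟨hx, hxj⟩ k _
    have h1 := hx k trivial
    by_cases hk : k = j
    · subst hk
      have h2 := abs_lt.mp (show |x k - c| < a from hxj)
      simp only [if_pos rfl]
      exact ⟨⟨by linarith [h2.1], by linarith [h2.2]⟩, h1⟩
    · simpa [hk] using h1
  calc volume _ ≤ _ := measure_mono hsub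
    _ = ∏ k : Fin n, volume (if k = j then Set.Ioo (c - a) (c + a) ∩ Set.Icc (0:ℝ) 1
          else Set.Icc (0:ℝ) 1) := volume_pi_pi _
    _ = ∏ k : Fin n, (if k = j then volume (Set.Ioo (c - a) (c + a) ∩ Set.Icc (0:ℝ) 1)
          else 1) := by
        refine Finset.prod_congr rfl fun k _ => ?_
        split <;> simp [Real.volume_Icc]
    _ = volume (Set.Ioo (c - a) (c + a) ∩ Set.Icc (0:ℝ) 1) := by
        rw [Finset.prod_ite_eq' Finset.univ j]
        simp
    _ ≤ volume (Set.Ioo (c - a) (c + a)) := measure_mono inter_subset_left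
    _ ≤ ENNReal.ofReal (2*a) := by
        rw [Real.volume_Ioo]
        exact ENNReal.ofReal_le_ofReal (by ring_nf; exact le_rfl)

lemma cube_pair_le (m : ℕ) (i j : Fin (m+1)) (hij : i ≠ j) (a : ℝ) :
    volume ((Set.univ.pi fun _ : Fin (m+1) => Set.Icc (0:ℝ) 1) ∩ {x | |x i - x j| < a}) ≤
      ENNReal.ofReal (2*a) := by
  set S := (Set.univ.pi fun _ : Fin (m+1) => Set.Icc (0:ℝ) 1) ∩ {x | |x i - x j| < a} with hSdef
  have hS : MeasurableSet S := by
    refine (MeasurableSet.univ_pi fun _ => measurableSet_Icc).inter ?_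
    exact measurableSet_lt (((measurable_pi_apply i).sub (measurable_pi_apply j)).abs)
      measurable_const
  obtain ⟨k, hk⟩ := Fin.exists_succAbove_eq hij
  have hmp := MeasureTheory.volume_preserving_piFinSuccAbove (fun _ : Fin (m+1) => ℝ) j
  set e := MeasurableEquiv.piFinSuccAbove (fun _ : Fin (m+1) => ℝ) j with he
  have himg : volume (⇑e.symm ⁻¹' S) = volume S :=
    (hmp.symm e).measure_preimage hS.nullMeasurableSet
  rw [← himg, Measure.volume_eq_prod,
    Measure.prod_apply_symm (e.symm.measurable hS)]
  have key : ∀ y : Fin m → ℝ, volume ((fun t => (t, y)) ⁻¹' (⇑e.symm ⁻¹' S)) ≤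
      Set.indicator (Set.univ.pi fun _ : Fin m => Set.Icc (0:ℝ) 1)
        (fun _ => ENNReal.ofReal (2*a)) y := by
    intro y
    have hmem : ∀ t : ℝ, t ∈ (fun t => (t, y)) ⁻¹' (⇑e.symm ⁻¹' S) ↔
        (Fin.insertNth (α := fun _ => ℝ) j t y ∈ S) := by
      intro t
      simp [he, MeasurableEquiv.piFinSuccAbove, Fin.insertNthEquiv]
    by_cases hy : y ∈ Set.univ.pi fun _ : Fin m => Set.Icc (0:ℝ) 1
    · rw [Set.indicator_of_mem hy]
      have hsub : ((fun t => (t, y)) ⁻¹' (⇑e.symm ⁻¹' S)) ⊆ Set.Ioo (y k - a) (y k + a) := by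
        intro t ht
        rw [hmem] at ht
        obtain ⟨-, habs⟩ := ht
        have h1 : Fin.insertNth (α := fun _ => ℝ) j t y i = y k := by rw [← hk]; exact Fin.insertNth_apply_succAbove (α := fun _ => ℝ) j t y k
        have h2 : Fin.insertNth (α := fun _ => ℝ) j t y j = t := Fin.insertNth_apply_same (α := fun _ => ℝ) j t y
        have : |y k - t| < a := by simp only [Set.mem_setOf_eq] at habs; rwa [h1, h2] at habs
        have := abs_lt.mp this
        exact ⟨by linarith [this.2], by linarith [this.1]⟩
      calc volume _ ≤ volume (Set.Ioo (y k - a) (y k + a)) := measure_mono hsub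
        _ ≤ ENNReal.ofReal (2*a) := by
            rw [Real.volume_Ioo]
            exact ENNReal.ofReal_le_ofReal (by ring_nf; exact le_rfl)
    · rw [Set.indicator_of_notMem hy]
      have hempty : ((fun t => (t, y)) ⁻¹' (⇑e.symm ⁻¹' S)) = ∅ := by
        ext t
        simp only [Set.mem_empty_iff_false, iff_false]
        intro ht
        rw [hmem] at ht
        obtain ⟨hcube, -⟩ := ht
        refine hy fun l _ => ?_
        have := hcube (j.succAbove l) trivial
        rwa [Fin.insertNth_apply_succAbove] at this
      rw [hempty]
      simp
  calc (∫⁻ y, volume ((fun t => (t, y)) ⁻¹' (⇑e.symm ⁻¹' S))) ≤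
      ∫⁻ y, Set.indicator (Set.univ.pi fun _ : Fin m => Set.Icc (0:ℝ) 1)
        (fun _ => ENNReal.ofReal (2*a)) y := lintegral_mono key
    _ = ENNReal.ofReal (2*a) * volume (Set.univ.pi fun _ : Fin m => Set.Icc (0:ℝ) 1) := by
        rw [lintegral_indicator (MeasurableSet.univ_pi fun _ => measurableSet_Icc)]
        simp [MeasureTheory.setLIntegral_const]
    _ = ENNReal.ofReal (2*a) := by
        rw [volume_pi_pi]
        simp [Real.volume_Icc]


lemma cube_slice_le' (n : ℕ) (j : Fin n) (c a : ℝ) :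
    volume (cube n ∩ {x | |x j - c| < a}) ≤ ENNReal.ofReal (2*a) :=
  cube_slice_le n j c a

lemma cube_pair_le' (m : ℕ) (i j : Fin (m+1)) (hij : i ≠ j) (a : ℝ) :
    volume (cube (m+1) ∩ {x | |x i - x j| < a}) ≤ ENNReal.ofReal (2*a) :=
  cube_pair_le m i j hij a

lemma cross_le (n : ℕ) (i j : Fin n) (a : ℝ) :
    volume ((cube n ×ˢ cube n) ∩ {p : (Fin n → ℝ) × (Fin n → ℝ) | |p.1 i - p.2 j| < a}) ≤
      ENNReal.ofReal (2*a) := by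
  have hmeas : MeasurableSet ((cube n ×ˢ cube n) ∩
      {p : (Fin n → ℝ) × (Fin n → ℝ) | |p.1 i - p.2 j| < a}) := by
    refine ((cube_meas n).prod (cube_meas n)).inter ?_
    exact measurableSet_lt
      ((((measurable_pi_apply i).comp measurable_fst).sub
        ((measurable_pi_apply j).comp measurable_snd)).abs) measurable_const
  rw [Measure.volume_eq_prod, Measure.prod_apply hmeas]
  have key : ∀ x : Fin n → ℝ,
      volume (Prod.mk x ⁻¹' ((cube n ×ˢ cube n) ∩
        {p : (Fin n → ℝ) × (Fin n → ℝ) | |p.1 i - p.2 j| < a})) ≤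
      Set.indicator (cube n) (fun _ => ENNReal.ofReal (2*a)) x := by
    intro x
    by_cases hx : x ∈ cube n
    · rw [Set.indicator_of_mem hx]
      refine le_trans (measure_mono ?_) (cube_slice_le' n j (x i) a)
      rintro y ⟨⟨-, hy2⟩, hy3⟩
      refine ⟨hy2, ?_⟩
      show |y j - x i| < a
      rw [abs_sub_comm]
      exact hy3
    · rw [Set.indicator_of_notMem hx]
      have hempty : Prod.mk x ⁻¹' ((cube n ×ˢ cube n) ∩
          {p : (Fin n → ℝ) × (Fin n → ℝ) | |p.1 i - p.2 j| < a}) = ∅ := by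
        ext y
        simp only [Set.mem_preimage, Set.mem_inter_iff, Set.mem_prod, Set.mem_empty_iff_false,
          iff_false, not_and]
        rintro ⟨hx', -⟩
        exact absurd hx' hx
      rw [hempty]
      simp
  calc _ ≤ ∫⁻ x, Set.indicator (cube n) (fun _ => ENNReal.ofReal (2*a)) x :=
      lintegral_mono key
    _ = ENNReal.ofReal (2*a) * volume (cube n) := by
        rw [lintegral_indicator (cube_meas n)]
        simp [MeasureTheory.setLIntegral_const]
    _ = ENNReal.ofReal (2*a) := by rw [vol_cube, mul_one]

lemma cover (n : ℕ) (hn : 2 ≤ n) (a : ℝ) (ha : 0 < a) (r s : Fin n → ℝ)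
    (hr : r ∈ Delta n) (hs : s ∈ Delta n)
    (h : ¬ memZ n a (sortedMerge n r s)) :
    r ⟨0, by omega⟩ < a ∨ s ⟨0, by omega⟩ < a ∨
      1 - a < r ⟨n-1, by omega⟩ ∨ 1 - a < s ⟨n-1, by omega⟩ ∨
      (∃ i j : Fin n, i ≠ j ∧ |r i - r j| < a) ∨ (∃ i j : Fin n, |r i - s j| < a) ∨
      (∃ i j : Fin n, i ≠ j ∧ |s i - s j| < a) := by
  classical
  set L := ((Multiset.ofList (List.ofFn r ++ List.ofFn s)).sort (· ≤ ·)) with hL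
  have hlen : L.length = 2 * n := by
    simp [hL, Multiset.length_sort]
    omega
  have hsorted : L.Pairwise (· ≤ ·) := Multiset.pairwise_sort ..
  have hmem : ∀ x ∈ L, (∃ i, r i = x) ∨ (∃ i, s i = x) := by
    intro x hx
    have hx' : x ∈ (List.ofFn r ++ List.ofFn s) := by
      simpa [hL, Multiset.mem_sort] using hx
    rcases List.mem_append.mp hx' with h' | h'
    · left
      obtain ⟨i, hi⟩ := List.mem_ofFn.mp h'
      exact ⟨i, hi⟩
    · right
      obtain ⟨i, hi⟩ := List.mem_ofFn.mp h'
      exact ⟨i, hi⟩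
  have hT : ∀ i : ℕ, sortedMerge n r s i = L.getD i 0 := fun _ => rfl
  by_cases hA : a ≤ sortedMerge n r s 0
  · by_cases hB : a ≤ 1 - sortedMerge n r s (2 * n - 1)
    · -- gap case
      have hC : ∃ j : ℕ, 1 ≤ j ∧ j ≤ 2 * n - 1 ∧
          sortedMerge n r s j - sortedMerge n r s (j - 1) < a := by
        by_contra hc
        push_neg at hc
        exact h ⟨hA, hB, fun j h1 h2 => hc j h1 h2⟩
      obtain ⟨j, hj1, hj2, hgap⟩ := hC
      have hjlt : j < L.length := by omega
      have hj1lt : j - 1 < L.length := by omega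
      have hgetj : sortedMerge n r s j = L.get ⟨j, hjlt⟩ := by
        rw [hT, List.getD_eq_getElem L 0 hjlt]; rfl
      have hgetj1 : sortedMerge n r s (j - 1) = L.get ⟨j - 1, hj1lt⟩ := by
        rw [hT, List.getD_eq_getElem L 0 hj1lt]; rfl
      set u := L.get ⟨j - 1, hj1lt⟩ with hu
      set v := L.get ⟨j, hjlt⟩ with hv
      have hgap' : v - u < a := by rw [hgetj, hgetj1] at hgap; exact hgap
      have huv : u ≤ v := by
        refine List.Pairwise.rel_get_of_lt hsorted ?_
        simp only [Fin.lt_def]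
        omega
      have humem : u ∈ L := List.get_mem _ _
      have hvmem : v ∈ L := List.get_mem _ _
      have hdup : ¬ (List.ofFn r ++ List.ofFn s).Nodup → ∃ i j : Fin n, r i = s j := by
        intro hnd
        rw [List.nodup_append] at hnd
        have N1 : (List.ofFn r).Nodup := List.nodup_ofFn.mpr hr.2.injective
        have N2 : (List.ofFn s).Nodup := List.nodup_ofFn.mpr hs.2.injective
        have hdisj : ¬ (List.ofFn r).Disjoint (List.ofFn s) := fun hd => hnd ⟨N1, N2, fun a ha b hb hab => by subst hab; exact hd ha hb⟩
        simp only [List.Disjoint, not_forall] at hdisj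
        obtain ⟨x, hx1, hx2⟩ := hdisj
        obtain ⟨hx1', hx2'⟩ : x ∈ List.ofFn r ∧ x ∈ List.ofFn s := by
          by_contra hcon
          push_neg at hcon
          tauto
        obtain ⟨i0, hi0⟩ := List.mem_ofFn.mp hx1'
        obtain ⟨j0, hj0⟩ := List.mem_ofFn.mp hx2'
        exact ⟨i0, j0, by rw [hi0, hj0]⟩
      have hne : (List.ofFn r ++ List.ofFn s).Nodup → u ≠ v := by
        intro hnd hueqv
        have hLnd : L.Nodup := by
          have : ((L : Multiset ℝ)).Nodup := by
            rw [hL, Multiset.sort_eq]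
            exact hnd
          simpa using this
        have := (List.Nodup.get_inj_iff hLnd).mp hueqv
        simp only [Fin.mk.injEq] at this
        omega
      have hcross0 : u = v → ∃ i j : Fin n, |r i - s j| < a := by
        intro hueqv
        have : ¬ (List.ofFn r ++ List.ofFn s).Nodup := fun hnd => hne hnd hueqv
        obtain ⟨i0, j0, hij0⟩ := hdup this
        exact ⟨i0, j0, by rw [hij0]; simpa using ha⟩
      have habs : |u - v| < a := by
        rw [abs_sub_comm, abs_of_nonneg (sub_nonneg.mpr huv)]
        exact hgap'
      rcases hmem u humem with ⟨i, hi⟩ | ⟨i, hi⟩ <;>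
        rcases hmem v hvmem with ⟨k, hk⟩ | ⟨k, hk⟩
      · -- u = r i, v = r k
        by_cases hik : i = k
        · exact Or.inr (Or.inr (Or.inr (Or.inr (Or.inr (Or.inl
            (hcross0 (by rw [← hi, ← hk, hik])))))))
        · exact Or.inr (Or.inr (Or.inr (Or.inr (Or.inl
            ⟨i, k, hik, by rw [hi, hk]; exact habs⟩))))
      · exact Or.inr (Or.inr (Or.inr (Or.inr (Or.inr (Or.inl
          ⟨i, k, by rw [hi, hk]; exact habs⟩)))))
      · exact Or.inr (Or.inr (Or.inr (Or.inr (Or.inr (Or.inl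
          ⟨k, i, by rw [hi, hk, abs_sub_comm]; exact habs⟩)))))
      · by_cases hik : i = k
        · exact Or.inr (Or.inr (Or.inr (Or.inr (Or.inr (Or.inl
            (hcross0 (by rw [← hi, ← hk, hik])))))))
        · exact Or.inr (Or.inr (Or.inr (Or.inr (Or.inr (Or.inr
            ⟨i, k, hik, by rw [hi, hk]; exact habs⟩)))))
    · -- max too large
      push_neg at hB
      have hlt : 2 * n - 1 < L.length := by omega
      have hg : sortedMerge n r s (2 * n - 1) = L.get ⟨2 * n - 1, hlt⟩ := by
        rw [hT, List.getD_eq_getElem L 0 hlt]; rfl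
      set x := L.get ⟨2 * n - 1, hlt⟩ with hx
      have hxmem : x ∈ L := List.get_mem _ _
      have hxgt : 1 - a < x := by rw [hg] at hB; linarith
      rcases hmem x hxmem with ⟨i, hi⟩ | ⟨i, hi⟩
      · refine Or.inr (Or.inr (Or.inl ?_))
        have hle : r i ≤ r ⟨n - 1, by omega⟩ := by
          refine hr.2.monotone ?_
          simp only [Fin.le_def]
          omega
        rw [hi] at hle
        linarith
      · refine Or.inr (Or.inr (Or.inr (Or.inl ?_)))
        have hle : s i ≤ s ⟨n - 1, by omega⟩ := by
          refine hs.2.monotone ?_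
          simp only [Fin.le_def]
          omega
        rw [hi] at hle
        linarith
  · -- min too small
    push_neg at hA
    have hlt : 0 < L.length := by omega
    have hg : sortedMerge n r s 0 = L.get ⟨0, hlt⟩ := by
      rw [hT, List.getD_eq_getElem L 0 hlt]; rfl
    set x := L.get ⟨0, hlt⟩ with hx
    have hxmem : x ∈ L := List.get_mem _ _
    have hxlt : x < a := by rw [hg] at hA; exact hA
    rcases hmem x hxmem with ⟨i, hi⟩ | ⟨i, hi⟩
    · refine Or.inl ?_
      have hle : r ⟨0, by omega⟩ ≤ r i := by
        refine hr.2.monotone ?_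
        simp only [Fin.le_def]
        omega
      rw [hi] at hle
      linarith
    · refine Or.inr (Or.inl ?_)
      have hle : s ⟨0, by omega⟩ ≤ s i := by
        refine hs.2.monotone ?_
        simp only [Fin.le_def]
        omega
      rw [hi] at hle
      linarith

lemma measurableSet_Delta (n : ℕ) : MeasurableSet (Delta n) := by
  have hset : Delta n = {r : Fin n → ℝ | ∀ i, r i ∈ Set.Icc (0:ℝ) 1} ∩
      {r : Fin n → ℝ | ∀ i j : Fin n, i < j → r i < r j} := rfl
  rw [hset]
  refine MeasurableSet.inter ?_ ?_
  · rw [Set.setOf_forall]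
    exact MeasurableSet.iInter fun i => (measurable_pi_apply i) measurableSet_Icc
  · rw [Set.setOf_forall]
    refine MeasurableSet.iInter fun i => ?_
    rw [Set.setOf_forall]
    refine MeasurableSet.iInter fun j => ?_
    rw [Set.setOf_forall]
    exact MeasurableSet.iInter fun _ =>
      measurableSet_lt (measurable_pi_apply i) (measurable_pi_apply j)

lemma pairEvent_left_le (m : ℕ) (i j : Fin (m+1)) (a : ℝ) :
    volume ((cube (m+1) ×ˢ cube (m+1)) ∩
      {p : (Fin (m+1) → ℝ) × (Fin (m+1) → ℝ) | i ≠ j ∧ |p.1 i - p.1 j| < a}) ≤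
      ENNReal.ofReal (2*a) := by
  by_cases hij : i = j
  · have : {p : (Fin (m+1) → ℝ) × (Fin (m+1) → ℝ) | i ≠ j ∧ |p.1 i - p.1 j| < a} = ∅ := by
      ext p; simp [hij]
    rw [this, Set.inter_empty]
    simp
  · have : {p : (Fin (m+1) → ℝ) × (Fin (m+1) → ℝ) | i ≠ j ∧ |p.1 i - p.1 j| < a} =
        {p : (Fin (m+1) → ℝ) × (Fin (m+1) → ℝ) | p.1 ∈ {x | |x i - x j| < a}} := by
      ext p; simp [hij]
    rw [this]
    exact prod_left_le _ _ (cube_pair_le' m i j hij a)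

lemma pairEvent_right_le (m : ℕ) (i j : Fin (m+1)) (a : ℝ) :
    volume ((cube (m+1) ×ˢ cube (m+1)) ∩
      {p : (Fin (m+1) → ℝ) × (Fin (m+1) → ℝ) | i ≠ j ∧ |p.2 i - p.2 j| < a}) ≤
      ENNReal.ofReal (2*a) := by
  by_cases hij : i = j
  · have : {p : (Fin (m+1) → ℝ) × (Fin (m+1) → ℝ) | i ≠ j ∧ |p.2 i - p.2 j| < a} = ∅ := by
      ext p; simp [hij]
    rw [this, Set.inter_empty]
    simp
  · have : {p : (Fin (m+1) → ℝ) × (Fin (m+1) → ℝ) | i ≠ j ∧ |p.2 i - p.2 j| < a} =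
        {p : (Fin (m+1) → ℝ) × (Fin (m+1) → ℝ) | p.2 ∈ {x | |x i - x j| < a}} := by
      ext p; simp [hij]
    rw [this]
    exact prod_right_le _ _ (cube_pair_le' m i j hij a)

/-- The measure of the part of `Δ_n × Δ_n` whose sorted merge lies outside `Z_a` is at most
`C·a`. -/
theorem measure_not_Za_bound (n : ℕ) (hn : 2 ≤ n) :
    ∃ C : ℝ, 0 < C ∧
      ∀ a : ℝ, 0 < a → a < Real.exp (-1) →
        (∫⁻ p in (Delta n ×ˢ Delta n : Set ((Fin n → ℝ) × (Fin n → ℝ))),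
          Set.indicator {p : (Fin n → ℝ) × (Fin n → ℝ) | ¬ memZ n a (sortedMerge n p.1 p.2)}
            (fun _ => (1 : ENNReal)) p) ≤
          ENNReal.ofReal (C * a) := by
  obtain ⟨m, rfl⟩ : ∃ m, n = m + 1 := ⟨n - 1, by omega⟩
  refine ⟨14 * ((m:ℝ)+1)^2, by positivity, ?_⟩
  intro a ha _
  set P := (Fin (m+1) → ℝ) × (Fin (m+1) → ℝ) with hP
  set z0 : Fin (m+1) := ⟨0, by omega⟩ with hz0
  set zl : Fin (m+1) := ⟨m, by omega⟩ with hzl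
  set c := ENNReal.ofReal (2*a) with hc
  set K := (cube (m+1)) ×ˢ (cube (m+1)) with hK
  set G : Fin (m+1) × Fin (m+1) → Set P := fun q =>
    {p : P | |p.1 z0 - 0| < a} ∪ {p : P | |p.2 z0 - 0| < a} ∪ {p : P | |p.1 zl - 1| < a} ∪
      {p : P | |p.2 zl - 1| < a} ∪ {p : P | q.1 ≠ q.2 ∧ |p.1 q.1 - p.1 q.2| < a} ∪
      {p : P | |p.1 q.1 - p.2 q.2| < a} ∪ {p : P | q.1 ≠ q.2 ∧ |p.2 q.1 - p.2 q.2| < a}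
    with hG
  set B' := ⋃ q : Fin (m+1) × Fin (m+1), G q with hB'
  -- measurability
  have hm1 : ∀ (i : Fin (m+1)) (c' : ℝ), MeasurableSet {p : P | |p.1 i - c'| < a} := fun i c' =>
    measurableSet_lt ((((measurable_pi_apply i).comp measurable_fst).sub measurable_const).abs)
      measurable_const
  have hm2 : ∀ (i : Fin (m+1)) (c' : ℝ), MeasurableSet {p : P | |p.2 i - c'| < a} := fun i c' =>
    measurableSet_lt ((((measurable_pi_apply i).comp measurable_snd).sub measurable_const).abs)
      measurable_const
  have hm3 : ∀ (i j : Fin (m+1)), MeasurableSet {p : P | i ≠ j ∧ |p.1 i - p.1 j| < a} := by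
    intro i j
    have : {p : P | i ≠ j ∧ |p.1 i - p.1 j| < a} =
        {p : P | i ≠ j} ∩ {p : P | |p.1 i - p.1 j| < a} := rfl
    rw [this]
    exact (MeasurableSet.const _).inter (measurableSet_lt
      ((((measurable_pi_apply i).comp measurable_fst).sub
        ((measurable_pi_apply j).comp measurable_fst)).abs) measurable_const)
  have hm4 : ∀ (i j : Fin (m+1)), MeasurableSet {p : P | i ≠ j ∧ |p.2 i - p.2 j| < a} := by
    intro i j
    have : {p : P | i ≠ j ∧ |p.2 i - p.2 j| < a} =
        {p : P | i ≠ j} ∩ {p : P | |p.2 i - p.2 j| < a} := rfl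
    rw [this]
    exact (MeasurableSet.const _).inter (measurableSet_lt
      ((((measurable_pi_apply i).comp measurable_snd).sub
        ((measurable_pi_apply j).comp measurable_snd)).abs) measurable_const)
  have hm5 : ∀ (i j : Fin (m+1)), MeasurableSet {p : P | |p.1 i - p.2 j| < a} := fun i j =>
    measurableSet_lt ((((measurable_pi_apply i).comp measurable_fst).sub
      ((measurable_pi_apply j).comp measurable_snd)).abs) measurable_const
  have hGmeas : ∀ q, MeasurableSet (G q) := by
    rintro ⟨i, j⟩
    exact ((((((hm1 z0 0).union (hm2 z0 0)).union (hm1 zl 1)).union (hm2 zl 1)).union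
      (hm3 i j)).union (hm5 i j)).union (hm4 i j)
  have hB'meas : MeasurableSet B' := MeasurableSet.iUnion hGmeas
  have hDD : MeasurableSet ((Delta (m+1) ×ˢ Delta (m+1) : Set P)) :=
    (measurableSet_Delta _).prod (measurableSet_Delta _)
  -- covering
  have hcov : ∀ p : P, p ∈ (Delta (m+1) ×ˢ Delta (m+1) : Set P) →
      ¬ memZ (m+1) a (sortedMerge (m+1) p.1 p.2) → p ∈ B' := by
    rintro ⟨r, s⟩ hp hbad
    obtain ⟨hr, hs⟩ := hp
    have hr0 : (0:ℝ) ≤ r z0 := (hr.1 z0).1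
    have hs0 : (0:ℝ) ≤ s z0 := (hs.1 z0).1
    have hr1 : r zl ≤ 1 := (hr.1 zl).2
    have hs1 : s zl ≤ 1 := (hs.1 zl).2
    rcases cover (m+1) (by omega) a ha r s hr hs hbad with
      h | h | h | h | ⟨i, j, hij, h⟩ | ⟨i, j, h⟩ | ⟨i, j, hij, h⟩
    · refine Set.mem_iUnion.mpr ⟨(z0, z0), ?_⟩
      have : |r z0 - 0| < a := by rw [sub_zero, abs_of_nonneg hr0]; exact h
      simp only [hG, Set.mem_union, Set.mem_setOf_eq]
      tauto
    · refine Set.mem_iUnion.mpr ⟨(z0, z0), ?_⟩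
      have : |s z0 - 0| < a := by rw [sub_zero, abs_of_nonneg hs0]; exact h
      simp only [hG, Set.mem_union, Set.mem_setOf_eq]
      tauto
    · refine Set.mem_iUnion.mpr ⟨(z0, z0), ?_⟩
      have h' : 1 - a < r zl := by simp only [Nat.add_sub_cancel] at h; exact h
      have : |r zl - 1| < a := by
        rw [abs_of_nonpos (by linarith)]
        linarith
      simp only [hG, Set.mem_union, Set.mem_setOf_eq]
      tauto
    · refine Set.mem_iUnion.mpr ⟨(z0, z0), ?_⟩
      have h' : 1 - a < s zl := by simp only [Nat.add_sub_cancel] at h; exact h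
      have : |s zl - 1| < a := by
        rw [abs_of_nonpos (by linarith)]
        linarith
      simp only [hG, Set.mem_union, Set.mem_setOf_eq]
      tauto
    · refine Set.mem_iUnion.mpr ⟨(i, j), ?_⟩
      simp only [hG, Set.mem_union, Set.mem_setOf_eq]
      tauto
    · refine Set.mem_iUnion.mpr ⟨(i, j), ?_⟩
      simp only [hG, Set.mem_union, Set.mem_setOf_eq]
      tauto
    · refine Set.mem_iUnion.mpr ⟨(i, j), ?_⟩
      simp only [hG, Set.mem_union, Set.mem_setOf_eq]
      tauto
  -- per-q bound
  have step : ∀ (X Y : Set P) (k : ENNReal), volume (K ∩ X) ≤ k → volume (K ∩ Y) ≤ c →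
      volume (K ∩ (X ∪ Y)) ≤ k + c := by
    intro X Y k hX hY
    rw [Set.inter_union_distrib_left]
    exact le_trans (measure_union_le _ _) (add_le_add hX hY)
  have hGq : ∀ q : Fin (m+1) × Fin (m+1), volume (G q ∩ K) ≤ 7 * c := by
    rintro ⟨i, j⟩
    have b1 : volume (K ∩ {p : P | |p.1 z0 - 0| < a}) ≤ c :=
      prod_left_le _ _ (cube_slice_le' (m+1) z0 0 a)
    have b2 : volume (K ∩ {p : P | |p.2 z0 - 0| < a}) ≤ c :=
      prod_right_le _ _ (cube_slice_le' (m+1) z0 0 a)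
    have b3 : volume (K ∩ {p : P | |p.1 zl - 1| < a}) ≤ c :=
      prod_left_le _ _ (cube_slice_le' (m+1) zl 1 a)
    have b4 : volume (K ∩ {p : P | |p.2 zl - 1| < a}) ≤ c :=
      prod_right_le _ _ (cube_slice_le' (m+1) zl 1 a)
    have b5 : volume (K ∩ {p : P | i ≠ j ∧ |p.1 i - p.1 j| < a}) ≤ c :=
      pairEvent_left_le m i j a
    have b6 : volume (K ∩ {p : P | |p.1 i - p.2 j| < a}) ≤ c := cross_le (m+1) i j a
    have b7 : volume (K ∩ {p : P | i ≠ j ∧ |p.2 i - p.2 j| < a}) ≤ c :=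
      pairEvent_right_le m i j a
    calc volume (G (i, j) ∩ K) = volume (K ∩ G (i, j)) := by rw [Set.inter_comm]
      _ ≤ c + c + c + c + c + c + c :=
        step _ _ _ (step _ _ _ (step _ _ _ (step _ _ _ (step _ _ _ (step _ _ _ b1 b2) b3) b4)
          b5) b6) b7
      _ = 7 * c := by ring
  -- assembling
  have hDsub : Delta (m+1) ⊆ cube (m+1) := fun x hx i _ => hx.1 i
  calc (∫⁻ p in (Delta (m+1) ×ˢ Delta (m+1) : Set P),
        Set.indicator {p : P | ¬ memZ (m+1) a (sortedMerge (m+1) p.1 p.2)}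
          (fun _ => (1 : ENNReal)) p)
      ≤ ∫⁻ p in (Delta (m+1) ×ˢ Delta (m+1) : Set P),
          Set.indicator B' (fun _ => (1 : ENNReal)) p := by
        refine setLIntegral_mono' hDD fun p hp => ?_
        by_cases hpB : p ∈ {p : P | ¬ memZ (m+1) a (sortedMerge (m+1) p.1 p.2)}
        · rw [Set.indicator_of_mem hpB, Set.indicator_of_mem (hcov p hp hpB)]
        · rw [Set.indicator_of_notMem hpB]
          exact zero_le
    _ = (volume.restrict (Delta (m+1) ×ˢ Delta (m+1) : Set P)) B' :=
        lintegral_indicator_one hB'meas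
    _ = volume (B' ∩ (Delta (m+1) ×ˢ Delta (m+1) : Set P)) :=
        Measure.restrict_apply hB'meas
    _ ≤ volume (B' ∩ K) :=
        measure_mono (Set.inter_subset_inter_right _ (Set.prod_mono hDsub hDsub))
    _ = volume (⋃ q : Fin (m+1) × Fin (m+1), (G q ∩ K)) := by rw [hB', Set.iUnion_inter]
    _ ≤ ∑' q : Fin (m+1) × Fin (m+1), volume (G q ∩ K) := measure_iUnion_le _
    _ ≤ ∑' _q : Fin (m+1) × Fin (m+1), 7 * c := ENNReal.tsum_le_tsum fun q => hGq q
    _ = ((m+1) * (m+1) : ℕ) * (7 * c) := by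
        rw [tsum_fintype]
        simp [Finset.sum_const, nsmul_eq_mul]
    _ ≤ ENNReal.ofReal (14 * ((m:ℝ)+1)^2 * a) := by
        rw [hc]
        rw [← ENNReal.ofReal_natCast ((m+1) * (m+1))]
        rw [← ENNReal.ofReal_ofNat 7]
        rw [← ENNReal.ofReal_mul (by norm_num)]
        rw [← ENNReal.ofReal_mul (by positivity)]
        refine ENNReal.ofReal_le_ofReal ?_
        push_cast
        apply le_of_eq
        ring

end
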